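/- Let H be a hypergraph with n vertices and at most m hyperedges, and let k > 1. Then the k-conflict-free chromatic number of H is O(m^{1/(k+1)} · log^{k/(k+1)} n). -/

import Mathlib

open Finset

noncomputable def sconst (k m : ℕ) : ℕ :=
  max (4*(k+1)) ⌈((2:ℝ)^(k+2) * m) ^ ((1:ℝ)/(k+1))⌉₊

noncomputable def xfun (k m i : ℕ) : ℝ :=
  ((i:ℝ)^(k+1) / ((2:ℝ)^(k+2) * m)) ^ ((1:ℝ)/k)

noncomputable def rfun (k m i : ℕ) : ℕ := ⌊xfun k m i⌋₊

noncomputable def psi (k m i : ℕ) : ℕ := min ((rfun k m i + 1)/2) ((i+1)/2)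

noncomputable def Gf (k m N : ℕ) : ℝ := ∑ i ∈ Finset.Ioc (sconst k m) N, ((psi k m i : ℝ))⁻¹

variable {k m i : ℕ}

lemma xfun_nonneg : 0 ≤ xfun k m i := Real.rpow_nonneg (by positivity) _

lemma xfun_pow (hk : 1 ≤ k) (i : ℕ) :
    (xfun k m i) ^ k = (i:ℝ)^(k+1) / ((2:ℝ)^(k+2) * m) := by
  have hb : (0:ℝ) ≤ (i:ℝ)^(k+1) / ((2:ℝ)^(k+2) * m) := by positivity
  have hkne : (k:ℝ) ≠ 0 := by exact_mod_cast Nat.one_le_iff_ne_zero.mp hk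
  rw [xfun, ← Real.rpow_natCast (_ ^ ((1:ℝ)/k)) k, ← Real.rpow_mul hb,
    one_div_mul_cancel hkne, Real.rpow_one]

lemma xfun_mono : Monotone (xfun k m) := by
  intro a b hab
  apply Real.rpow_le_rpow (by positivity) ?_ (by positivity)
  gcongr

lemma psi_mono : Monotone (psi k m) := by
  intro a b hab
  unfold psi
  have : rfun k m a ≤ rfun k m b := Nat.floor_le_floor (xfun_mono hab)
  exact le_min (min_le_left _ _ |>.trans (by omega)) (min_le_right _ _ |>.trans (by omega))

lemma one_le_xfun (hk : 1 ≤ k) (hm : 1 ≤ m) (hi : sconst k m < i) : 1 ≤ xfun k m i := by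
  have hm' : (0:ℝ) < m := by exact_mod_cast hm
  have h1 : ((2:ℝ)^(k+2) * m) ^ ((1:ℝ)/(k+1)) ≤ (i:ℝ) := by
    calc ((2:ℝ)^(k+2) * m) ^ ((1:ℝ)/(k+1)) ≤ (⌈((2:ℝ)^(k+2) * m) ^ ((1:ℝ)/(k+1))⌉₊ : ℝ) :=
          Nat.le_ceil _
    _ ≤ (sconst k m : ℝ) := by unfold sconst; exact_mod_cast (le_max_right _ _)
    _ ≤ (i:ℝ) := by exact_mod_cast hi.le
  have hd : (0:ℝ) ≤ (2:ℝ)^(k+2) * m := by positivity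
  have h2 : (2:ℝ)^(k+2) * m ≤ (i:ℝ)^(k+1) := by
    calc (2:ℝ)^(k+2) * m = (((2:ℝ)^(k+2) * m) ^ ((1:ℝ)/(k+1))) ^ (k+1 : ℕ) := by
          rw [← Real.rpow_natCast (_ ^ _) (k+1), ← Real.rpow_mul hd]
          push_cast
          rw [one_div_mul_cancel (by positivity), Real.rpow_one]
    _ ≤ (i:ℝ)^(k+1 : ℕ) := by
          apply pow_le_pow_left₀ (Real.rpow_nonneg hd _) h1
  have : (1:ℝ) ≤ (i:ℝ)^(k+1) / ((2:ℝ)^(k+2) * m) := by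
    rw [le_div_iff₀ (by positivity)]
    simpa using h2
  calc (1:ℝ) = (1:ℝ) ^ ((1:ℝ)/k) := (Real.one_rpow _).symm
  _ ≤ xfun k m i := Real.rpow_le_rpow zero_le_one this (by positivity)

lemma one_le_rfun (hk : 1 ≤ k) (hm : 1 ≤ m) (hi : sconst k m < i) : 1 ≤ rfun k m i := by
  have := one_le_xfun hk hm hi
  exact Nat.le_floor (by simpa using this)

lemma one_le_psi (hk : 1 ≤ k) (hm : 1 ≤ m) (hi : sconst k m < i) : 1 ≤ psi k m i := by
  have := one_le_rfun hk hm hi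
  unfold psi; omega


lemma sum_Ioc_telescope (f : ℕ → ℝ) (s : ℕ) : ∀ n, s ≤ n →
    ∑ i ∈ Finset.Ioc s n, (f i - f (i-1)) = f n - f s := by
  intro n
  induction n with
  | zero => intro h; interval_cases s; simp
  | succ n ih =>
    intro h
    rcases Nat.lt_or_ge s (n+1) with h1 | h2
    · have hs : s ≤ n := by omega
      rw [Finset.sum_Ioc_succ_top hs, ih hs]
      simp
    · have : s = n + 1 := by omega
      subst this
      simp

lemma geom_step (k : ℕ) (hk : 1 ≤ k) {a : ℝ} (ha0 : 0 ≤ a) (ha1 : a ≤ 1) :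
    1 - a ≤ k * (1 - a ^ ((1:ℝ)/k)) := by
  set c := a ^ ((1:ℝ)/k) with hc
  have hc0 : 0 ≤ c := Real.rpow_nonneg ha0 _
  have hc1 : c ≤ 1 := Real.rpow_le_one ha0 ha1 (by positivity)
  have hck : c ^ k = a := by
    rw [hc, ← Real.rpow_natCast (a ^ ((1:ℝ)/k)) k, ← Real.rpow_mul ha0]
    rw [one_div_mul_cancel (by exact_mod_cast Nat.one_le_iff_ne_zero.mp hk), Real.rpow_one]
  have hgeom : (1 - c) * (∑ j ∈ Finset.range k, c ^ j) = 1 - c ^ k := by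
    have := geom_sum_mul c k
    nlinarith [this]
  have hsum : (∑ j ∈ Finset.range k, c ^ j) ≤ k := by
    calc (∑ j ∈ Finset.range k, c ^ j) ≤ ∑ _j ∈ Finset.range k, (1:ℝ) :=
      Finset.sum_le_sum (fun j _ => pow_le_one₀ hc0 hc1)
    _ = k := by simp
  calc 1 - a = (1 - c) * (∑ j ∈ Finset.range k, c ^ j) := by rw [hgeom, hck]
  _ ≤ (1 - c) * k := by
      apply mul_le_mul_of_nonneg_left hsum (by linarith)
  _ = k * (1 - c) := by ring

lemma per_term_x (k i : ℕ) (hk : 1 ≤ k) (hi : 2 ≤ i) :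
    1/((i:ℝ) * (i:ℝ)^((1:ℝ)/k)) ≤
      k * ((((i-1:ℕ)):ℝ)^(-(1:ℝ)/k) - (i:ℝ)^(-(1:ℝ)/k)) := by
  have hipos : (0:ℝ) < i := by exact_mod_cast Nat.lt_of_lt_of_le Nat.zero_lt_two hi
  have hi1pos : (0:ℝ) < ((i-1:ℕ):ℝ) := by
    have : 1 ≤ i - 1 := by omega
    exact_mod_cast Nat.lt_of_lt_of_le Nat.zero_lt_one this
  set a : ℝ := ((i-1:ℕ):ℝ)/(i:ℝ) with ha
  have ha0 : 0 ≤ a := by positivity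
  have ha1 : a ≤ 1 := by
    rw [ha, div_le_one hipos]
    exact_mod_cast Nat.sub_le i 1
  have hcast : ((i-1:ℕ):ℝ) = (i:ℝ) - 1 := by
    have : 1 ≤ i := by omega
    push_cast [this]
    ring
  have h1a : 1 - a = 1/(i:ℝ) := by
    rw [ha, hcast]
    field_simp
    ring
  set c := a ^ ((1:ℝ)/k) with hc
  have hcpos : 0 < c := Real.rpow_pos_of_pos (by positivity) _
  have hc1 : c ≤ 1 := Real.rpow_le_one ha0 ha1 (by positivity)
  have hgs : 1/(i:ℝ) ≤ k * (1 - c) := by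
    rw [← h1a]
    exact geom_step k hk ha0 ha1
  -- (i-1)^{-1/k} = i^{-1/k} / c
  have hkey : (((i-1:ℕ)):ℝ)^(-(1:ℝ)/k) = (i:ℝ)^(-(1:ℝ)/k) / c := by
    rw [hc, ha, Real.div_rpow (le_of_lt hi1pos) (le_of_lt hipos)]
    rw [neg_div, Real.rpow_neg (le_of_lt hi1pos), Real.rpow_neg (le_of_lt hipos)]
    have p1 : (0:ℝ) < ((i-1:ℕ):ℝ)^((1:ℝ)/k) := Real.rpow_pos_of_pos hi1pos _
    have p2 : (0:ℝ) < (i:ℝ)^((1:ℝ)/k) := Real.rpow_pos_of_pos hipos _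
    field_simp
  have hipowpos : 0 < (i:ℝ)^(-(1:ℝ)/k) := Real.rpow_pos_of_pos hipos _
  have hdiff : (i:ℝ)^(-(1:ℝ)/k) * (1 - c) ≤
      (((i-1:ℕ)):ℝ)^(-(1:ℝ)/k) - (i:ℝ)^(-(1:ℝ)/k) := by
    rw [hkey]
    have h2 : (1 - c) ≤ (1 - c)/c := by
      rw [le_div_iff₀ hcpos]
      nlinarith
    calc (i:ℝ)^(-(1:ℝ)/k) * (1 - c) ≤ (i:ℝ)^(-(1:ℝ)/k) * ((1 - c)/c) :=
          mul_le_mul_of_nonneg_left h2 (le_of_lt hipowpos)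
    _ = (i:ℝ)^(-(1:ℝ)/k) / c - (i:ℝ)^(-(1:ℝ)/k) := by
          field_simp
  have hLHS : 1/((i:ℝ) * (i:ℝ)^((1:ℝ)/k)) = (i:ℝ)^(-(1:ℝ)/k) * (1/(i:ℝ)) := by
    rw [neg_div, Real.rpow_neg (le_of_lt hipos)]
    field_simp
  calc 1/((i:ℝ) * (i:ℝ)^((1:ℝ)/k)) = (i:ℝ)^(-(1:ℝ)/k) * (1/(i:ℝ)) := hLHS
  _ ≤ (i:ℝ)^(-(1:ℝ)/k) * (k * (1 - c)) :=
        mul_le_mul_of_nonneg_left hgs (le_of_lt hipowpos)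
  _ = k * ((i:ℝ)^(-(1:ℝ)/k) * (1 - c)) := by ring
  _ ≤ k * ((((i-1:ℕ)):ℝ)^(-(1:ℝ)/k) - (i:ℝ)^(-(1:ℝ)/k)) := by
        apply mul_le_mul_of_nonneg_left hdiff (by positivity)

lemma tail_sum_x (k : ℕ) (hk : 1 ≤ k) (s n : ℕ) (hs : 1 ≤ s) (hsn : s ≤ n) :
    ∑ i ∈ Finset.Ioc s n, 1/((i:ℝ) * (i:ℝ)^((1:ℝ)/k)) ≤ k * (s:ℝ)^(-(1:ℝ)/k) := by
  set f : ℕ → ℝ := fun i => -((i:ℝ)^(-(1:ℝ)/k)) with hf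
  have hstep : ∀ i ∈ Finset.Ioc s n, 1/((i:ℝ) * (i:ℝ)^((1:ℝ)/k)) ≤ k * (f i - f (i-1)) := by
    intro i hi
    obtain ⟨hi1, hi2⟩ := Finset.mem_Ioc.mp hi
    have h2 : 2 ≤ i := by omega
    have := per_term_x k i hk h2
    rw [hf]
    simp only
    calc 1/((i:ℝ) * (i:ℝ)^((1:ℝ)/k))
        ≤ k * ((((i-1:ℕ)):ℝ)^(-(1:ℝ)/k) - (i:ℝ)^(-(1:ℝ)/k)) := this
    _ = k * (-((i:ℝ)^(-(1:ℝ)/k)) - -(((i-1:ℕ):ℝ)^(-(1:ℝ)/k))) := by ring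
  calc ∑ i ∈ Finset.Ioc s n, 1/((i:ℝ) * (i:ℝ)^((1:ℝ)/k))
      ≤ ∑ i ∈ Finset.Ioc s n, (k : ℝ) * (f i - f (i-1)) := Finset.sum_le_sum hstep
  _ = k * ∑ i ∈ Finset.Ioc s n, (f i - f (i-1)) := by rw [Finset.mul_sum]
  _ = k * (f n - f s) := by rw [sum_Ioc_telescope f s n hsn]
  _ = k * ((s:ℝ)^(-(1:ℝ)/k) - (n:ℝ)^(-(1:ℝ)/k)) := by rw [hf]; ring
  _ ≤ k * (s:ℝ)^(-(1:ℝ)/k) := by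
      have hn0 : (0:ℝ) ≤ (n:ℝ)^(-(1:ℝ)/k) := Real.rpow_nonneg (Nat.cast_nonneg n) _
      have hk0 : (0:ℝ) ≤ k := Nat.cast_nonneg k
      nlinarith

lemma tail_sum_harmonic (s n : ℕ) (hs : 1 ≤ s) (hsn : s ≤ n) :
    ∑ i ∈ Finset.Ioc s n, 1/(i:ℝ) ≤ Real.log n := by
  set f : ℕ → ℝ := fun i => Real.log i with hf
  have hstep : ∀ i ∈ Finset.Ioc s n, 1/(i:ℝ) ≤ f i - f (i-1) := by
    intro i hi
    obtain ⟨hi1, hi2⟩ := Finset.mem_Ioc.mp hi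
    have h2 : 2 ≤ i := by omega
    have hipos : (0:ℝ) < i := by exact_mod_cast Nat.lt_of_lt_of_le Nat.zero_lt_two h2
    have hi1pos : (0:ℝ) < ((i-1:ℕ):ℝ) := by
      have : 1 ≤ i - 1 := by omega
      exact_mod_cast Nat.lt_of_lt_of_le Nat.zero_lt_one this
    have hlog := Real.log_le_sub_one_of_pos (show (0:ℝ) < ((i-1:ℕ):ℝ)/(i:ℝ) by positivity)
    rw [Real.log_div (ne_of_gt hi1pos) (ne_of_gt hipos)] at hlog
    have hcast : ((i-1:ℕ):ℝ) = (i:ℝ) - 1 := by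
      have : 1 ≤ i := by omega
      push_cast [this]
      ring
    rw [hf]
    simp only
    rw [hcast] at hlog
    have : ((i:ℝ) - 1)/(i:ℝ) - 1 = -(1/(i:ℝ)) := by field_simp; ring
    rw [this] at hlog
    have : Real.log ((i:ℝ) - 1) = Real.log ((i-1:ℕ):ℝ) := by rw [hcast]
    rw [this] at hlog
    linarith
  calc ∑ i ∈ Finset.Ioc s n, 1/(i:ℝ) ≤ ∑ i ∈ Finset.Ioc s n, (f i - f (i-1)) :=
        Finset.sum_le_sum hstep
  _ = f n - f s := sum_Ioc_telescope f s n hsn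
  _ ≤ Real.log n := by
      have : 0 ≤ Real.log s := Real.log_natCast_nonneg s
      rw [hf]
      simp only
      linarith

section Turan
variable {V : Type} [DecidableEq V]

lemma turan (k m : ℕ) (hk : 1 ≤ k) (hm : 1 ≤ m)
    (W : Finset V) (F : Finset (Finset V))
    (hF : ∀ T ∈ F, T ⊆ W ∧ k + 1 ≤ T.card) (hFm : F.card ≤ m)
    (hs : sconst k m < W.card) :
    ∃ C ⊆ W, psi k m W.card ≤ C.card ∧ ∀ T ∈ F, ¬ T ⊆ C := by
  classical
  set N := W.card with hN
  have hWne : W.Nonempty := card_pos.mp (by omega)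
  have hs4 : 4*(k+1) ≤ sconst k m := le_max_left _ _
  -- pick an element from each nonempty finset
  let pick : Finset V → V := fun T => if h : T.Nonempty then h.choose else hWne.choose
  have hpick : ∀ T ∈ F, pick T ∈ T := by
    intro T hT
    have hTne : T.Nonempty := card_pos.mp (by have := (hF T hT).2; omega)
    simp only [pick, dif_pos hTne]
    exact hTne.choose_spec
  by_cases hbr : 2 * F.card ≤ N
  · -- few edges: delete one vertex per edge
    refine ⟨W \ F.image pick, sdiff_subset, ?_, ?_⟩
    · have h1 : (F.image pick).card ≤ F.card := card_image_le
      have h2 : N - F.card ≤ (W \ F.image pick).card := by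
        calc N - F.card ≤ N - (F.image pick).card := by omega
        _ ≤ (W \ F.image pick).card := le_card_sdiff _ _
      have h3 : psi k m N ≤ (N+1)/2 := min_le_right _ _
      omega
    · intro T hT hsub
      have := hsub (hpick T hT)
      simp only [mem_sdiff] at this
      exact this.2 (mem_image_of_mem pick hT)
  · -- many edges: averaging over r-subsets
    push_neg at hbr
    set r := rfun k m N with hr
    have hr1 : 1 ≤ r := one_le_rfun hk hm hs
    have hNm : N < 2 * m := by omega
    -- r ≤ N/2 (real estimate)
    have hx2 : xfun k m N ≤ (N:ℝ)/2 := by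
      have hxk : (xfun k m N)^k ≤ ((N:ℝ)/2)^k := by
        rw [xfun_pow hk]
        rw [div_pow, div_le_div_iff₀ (by positivity) (by positivity)]
        have hNR : (N:ℝ) ≤ 2*m := by exact_mod_cast hNm.le
        calc (N:ℝ)^(k+1) * 2^k = (N:ℝ)^k * N * 2^k := by ring
        _ ≤ (N:ℝ)^k * (2*(m:ℝ)) * 2^k := by gcongr <;> positivity
        _ = (N:ℝ)^k * (2^(k+1) * m) := by ring
        _ ≤ (N:ℝ)^k * ((2:ℝ)^(k+2) * m) := by
              have hnn : (0:ℝ) ≤ (N:ℝ)^k * (2^(k+1)*(m:ℝ)) := by positivity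
              rw [show ((2:ℝ)^(k+2)) = 2*2^(k+1) from by ring]
              nlinarith [hnn]
      exact le_of_pow_le_pow_left₀ (by omega) (by positivity) hxk
    have hrN2 : 2 * r ≤ N := by
      have h1 : (r:ℝ) ≤ (N:ℝ)/2 := le_trans (Nat.floor_le xfun_nonneg) hx2
      have : (2*r : ℝ) ≤ (N:ℝ) := by linarith
      exact_mod_cast this
    have hrN : r ≤ N := by omega
    set P := W.powersetCard r with hP
    have hPcard : P.card = N.choose r := card_powersetCard r W
    have hPne : P.Nonempty := powersetCard_nonempty.mpr hrN
    set B := (N - (k+1)).choose (r - (k+1)) with hB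
    -- counting: number of r-subsets containing a given T is ≤ B
    have hcount : ∀ T ∈ F, (P.filter (fun C => T ⊆ C)).card ≤ B := by
      intro T hT
      obtain ⟨hTW, hTk⟩ := hF T hT
      by_cases hrk : k + 1 ≤ r
      · obtain ⟨T', hT'T, hT'card⟩ := Finset.exists_subset_card_eq hTk
        have hT'W : T' ⊆ W := hT'T.trans hTW
        have hmap : ∀ C ∈ P.filter (fun C => T ⊆ C),
            C \ T' ∈ (W \ T').powersetCard (r - (k+1)) := by
          intro C hC
          simp only [mem_filter] at hC
          obtain ⟨hCP, hTC⟩ := hC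
          rw [mem_powersetCard] at hCP ⊢
          have hT'C : T' ⊆ C := hT'T.trans hTC
          constructor
          · exact sdiff_subset_sdiff hCP.1 (le_refl _)
          · rw [card_sdiff_of_subset hT'C, hCP.2, hT'card]
        have hinj : Set.InjOn (fun C => C \ T') ↑(P.filter (fun C => T ⊆ C)) := by
          intro C1 h1 C2 h2 he
          simp only [coe_filter, Set.mem_setOf_eq] at h1 h2
          have e1 : T' ⊆ C1 := hT'T.trans h1.2
          have e2 : T' ⊆ C2 := hT'T.trans h2.2
          have he' : C1 \ T' = C2 \ T' := he
          calc C1 = C1 \ T' ∪ T' := (sdiff_union_of_subset e1).symm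
          _ = C2 \ T' ∪ T' := by rw [he']
          _ = C2 := sdiff_union_of_subset e2
        calc (P.filter (fun C => T ⊆ C)).card
            ≤ ((W \ T').powersetCard (r - (k+1))).card :=
              card_le_card_of_injOn _ hmap hinj
        _ = (W \ T').card.choose (r - (k+1)) := card_powersetCard _ _
        _ = B := by rw [card_sdiff_of_subset hT'W, hT'card]
      · have : P.filter (fun C => T ⊆ C) = ∅ := by
          apply filter_eq_empty_iff.mpr
          intro C hC hsub
          have hCW := mem_powersetCard.mp hC
          have : T.card ≤ C.card := card_le_card hsub
          omega
        simp [this, hB]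
    -- sum over all r-subsets
    have hsum : ∑ C ∈ P, (F.filter (fun T => T ⊆ C)).card ≤ F.card * B := by
      calc ∑ C ∈ P, (F.filter (fun T => T ⊆ C)).card
          = ∑ C ∈ P, ∑ T ∈ F, if T ⊆ C then 1 else 0 := by
            simp only [Finset.card_filter]
      _ = ∑ T ∈ F, ∑ C ∈ P, if T ⊆ C then 1 else 0 := Finset.sum_comm
      _ = ∑ T ∈ F, (P.filter (fun C => T ⊆ C)).card := by
            simp only [Finset.card_filter]
      _ ≤ ∑ _T ∈ F, B := Finset.sum_le_sum hcount
      _ = F.card * B := by rw [sum_const, smul_eq_mul]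
    obtain ⟨C₀, hC₀P, hmin⟩ := P.exists_min_image (fun C => (F.filter (fun T => T ⊆ C)).card) hPne
    set bad := (F.filter (fun T => T ⊆ C₀)).card with hbad
    have hPbad : P.card * bad ≤ F.card * B := by
      calc P.card * bad = P.card • bad := by rw [smul_eq_mul]
      _ ≤ ∑ C ∈ P, (F.filter (fun T => T ⊆ C)).card := Finset.card_nsmul_le_sum _ _ _ hmin
      _ ≤ F.card * B := hsum
    have hC₀W : C₀ ⊆ W := (mem_powersetCard.mp hC₀P).1
    have hC₀card : C₀.card = r := (mem_powersetCard.mp hC₀P).2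
    -- key numeric bound : 2 * bad ≤ r
    have hbad2 : 2 * bad ≤ r := by
      by_cases hrk : k + 1 ≤ r
      · -- 2 * F.card * r.choose (k+1) ≤ r * N.choose (k+1)
        have hNk : N / 2 ≤ N - k := by omega
        have hkN : k + 1 ≤ N := by omega
        have hstep : 2 * m * r^k ≤ (N-k)^(k+1) := by
          have hreal : (2:ℝ) * m * (r:ℝ)^k ≤ ((N:ℝ) - k)^(k+1) := by
            have hrx : (r:ℝ) ≤ xfun k m N := Nat.floor_le xfun_nonneg
            have h1 : (r:ℝ)^k ≤ (xfun k m N)^k :=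
              pow_le_pow_left₀ (Nat.cast_nonneg r) hrx k
            rw [xfun_pow hk] at h1
            have hm' : (0:ℝ) < m := by exact_mod_cast hm
            have hm0 : (m:ℝ) ≠ 0 := ne_of_gt hm'
            have h2 : (2:ℝ) * m * (r:ℝ)^k ≤ (N:ℝ)^(k+1) / 2^(k+1) := by
              calc (2:ℝ) * m * (r:ℝ)^k ≤ 2 * m * ((N:ℝ)^(k+1) / (2^(k+2) * m)) := by
                    gcongr
              _ = (N:ℝ)^(k+1) / 2^(k+1) := by
                    rw [show ((2:ℝ)^(k+2)) = 2^(k+1)*2 from by ring]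
                    field_simp
            have h3 : (N:ℝ)^(k+1) / 2^(k+1) = ((N:ℝ)/2)^(k+1) := by
              rw [div_pow]
            have h4 : ((N:ℝ)/2)^(k+1) ≤ ((N:ℝ) - k)^(k+1) := by
              apply pow_le_pow_left₀ (by positivity)
              have hkN' : (2*k : ℝ) ≤ N := by
                have : 2 * k ≤ N := by omega
                exact_mod_cast this
              linarith
            calc (2:ℝ) * m * (r:ℝ)^k ≤ ((N:ℝ)/2)^(k+1) := h3 ▸ h2
            _ ≤ ((N:ℝ) - k)^(k+1) := h4
          have hcast : ((N:ℝ) - k) = ((N - k : ℕ) : ℝ) := by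
            have : k ≤ N := by omega
            push_cast [this]
            ring
          rw [hcast] at hreal
          exact_mod_cast hreal
        have h2 : 2 * F.card * r.choose (k+1) ≤ r * N.choose (k+1) := by
          have hfac : 0 < Nat.factorial (k+1) := Nat.factorial_pos _
          have hd1 : r.choose (k+1) * Nat.factorial (k+1) = r.descFactorial (k+1) := by
            rw [Nat.descFactorial_eq_factorial_mul_choose]; ring
          have hd2 : N.choose (k+1) * Nat.factorial (k+1) = N.descFactorial (k+1) := by
            rw [Nat.descFactorial_eq_factorial_mul_choose]; ring
          have hub : r.descFactorial (k+1) ≤ r^(k+1) := Nat.descFactorial_le_pow _ _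
          have hlb : (N - k)^(k+1) ≤ N.descFactorial (k+1) := by
            have := Nat.pow_sub_le_descFactorial N (k+1)
            have he : N + 1 - (k+1) = N - k := by omega
            rwa [he] at this
          have hmain : 2 * F.card * r.descFactorial (k+1) ≤ r * N.descFactorial (k+1) := by
            calc 2 * F.card * r.descFactorial (k+1) ≤ 2 * m * r^(k+1) := by
                  have := Nat.mul_le_mul (Nat.mul_le_mul_left 2 hFm) hub
                  exact this
            _ = (2 * m * r^k) * r := by ring
            _ ≤ (N-k)^(k+1) * r := Nat.mul_le_mul_right r hstep
            _ ≤ N.descFactorial (k+1) * r := Nat.mul_le_mul_right r hlb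
            _ = r * N.descFactorial (k+1) := by ring
          have := hmain
          rw [← hd1, ← hd2] at this
          have h' : 2 * F.card * r.choose (k+1) * Nat.factorial (k+1) ≤ r * N.choose (k+1) * Nat.factorial (k+1) := by
            calc 2 * F.card * r.choose (k+1) * Nat.factorial (k+1) = 2 * F.card * (r.choose (k+1) * Nat.factorial (k+1)) := by ring
            _ ≤ r * (N.choose (k+1) * Nat.factorial (k+1)) := this
            _ = r * N.choose (k+1) * Nat.factorial (k+1) := by ring
          exact Nat.le_of_mul_le_mul_right h' hfac
        -- choose identity
        have hid : N.choose r * r.choose (k+1) = N.choose (k+1) * B :=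
          Nat.choose_mul hrk
        have hkN' : k + 1 ≤ N := by omega
        have hcpos : 0 < N.choose (k+1) := Nat.choose_pos hkN'
        have hppos : 0 < N.choose r := Nat.choose_pos hrN
        -- 2 * P.card * bad ≤ 2 * F.card * B ≤ r * P.card
        have hFB : 2 * (F.card * B) * N.choose (k+1) ≤ r * N.choose r * N.choose (k+1) := by
          calc 2 * (F.card * B) * N.choose (k+1) = 2 * F.card * (N.choose (k+1) * B) := by ring
          _ = 2 * F.card * (N.choose r * r.choose (k+1)) := by rw [hid]
          _ = (2 * F.card * r.choose (k+1)) * N.choose r := by ring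
          _ ≤ (r * N.choose (k+1)) * N.choose r := Nat.mul_le_mul_right _ h2
          _ = r * N.choose r * N.choose (k+1) := by ring
        have hFB' : 2 * (F.card * B) ≤ r * N.choose r := Nat.le_of_mul_le_mul_right hFB hcpos
        have : 2 * (N.choose r * bad) ≤ r * N.choose r := by
          calc 2 * (N.choose r * bad) = 2 * (P.card * bad) := by rw [hPcard]
          _ ≤ 2 * (F.card * B) := by omega
          _ ≤ r * N.choose r := hFB'
        have h'' : N.choose r * (2 * bad) ≤ N.choose r * r := by
          calc N.choose r * (2 * bad) = 2 * (N.choose r * bad) := by ring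
          _ ≤ r * N.choose r := this
          _ = N.choose r * r := by ring
        exact Nat.le_of_mul_le_mul_left h'' hppos
      · -- r ≤ k : no T fits inside C₀
        have : F.filter (fun T => T ⊆ C₀) = ∅ := by
          apply filter_eq_empty_iff.mpr
          intro T hT hsub
          have h1 := (hF T hT).2
          have h2 : T.card ≤ C₀.card := card_le_card hsub
          omega
        rw [hbad, this]
        simp
    -- construct C by deleting one vertex per bad T
    set D := (F.filter (fun T => T ⊆ C₀)).image pick with hD
    refine ⟨C₀ \ D, (sdiff_subset).trans hC₀W, ?_, ?_⟩
    · have hDcard : D.card ≤ bad := card_image_le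
      have h1 : C₀.card - D.card ≤ (C₀ \ D).card := le_card_sdiff _ _
      have h2 : psi k m N ≤ (r+1)/2 := min_le_left _ _
      omega
    · intro T hT hsub
      have hTC₀ : T ⊆ C₀ := hsub.trans sdiff_subset
      have hTfil : T ∈ F.filter (fun T => T ⊆ C₀) := mem_filter.mpr ⟨hT, hTC₀⟩
      have hpT : pick T ∈ D := mem_image_of_mem pick hTfil
      have : pick T ∈ C₀ \ D := hsub (hpick T hT)
      simp only [mem_sdiff] at this
      exact this.2 hpT
lemma Gf_nonneg (k m N : ℕ) : 0 ≤ Gf k m N := by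
  apply Finset.sum_nonneg
  intro i _
  positivity

lemma recColor (k m : ℕ) (hk : 1 ≤ k) (hm : 1 ≤ m)
    (E : Finset (Finset V)) (hE : E.card ≤ m) :
    ∀ N (W : Finset V), W.card = N →
    ∃ (t : ℕ) (c : V → ℕ), (∀ v ∈ W, c v < t) ∧
      ((t:ℝ) ≤ sconst k m + (if N ≤ sconst k m then 0 else 1 + Gf k m N)) ∧
      (∀ S ∈ E, (S ∩ W).Nonempty → ∃ i,
        1 ≤ ((S ∩ W).filter (fun v => c v = i)).card ∧
        ((S ∩ W).filter (fun v => c v = i)).card ≤ k) := by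
  intro N
  induction N using Nat.strong_induction_on with
  | _ N IH =>
  intro W hW
  by_cases hbase : N ≤ sconst k m
  · -- base case: unique colors
    refine ⟨N, fun v => W.toList.idxOf v, ?_, ?_, ?_⟩
    · intro v hv
      have : W.toList.idxOf v < W.toList.length :=
        List.idxOf_lt_length_iff.mpr (Finset.mem_toList.mpr hv)
      rwa [Finset.length_toList, hW] at this
    · rw [if_pos hbase]
      push_cast
      have : (N:ℝ) ≤ sconst k m := by exact_mod_cast hbase
      linarith
    · intro S hS hne
      obtain ⟨v₀, hv₀⟩ := hne
      refine ⟨W.toList.idxOf v₀, ?_⟩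
      have heq : (S ∩ W).filter (fun v => W.toList.idxOf v = W.toList.idxOf v₀) = {v₀} := by
        apply Finset.eq_singleton_iff_unique_mem.mpr
        constructor
        · exact Finset.mem_filter.mpr ⟨hv₀, rfl⟩
        · intro u hu
          obtain ⟨huSW, huidx⟩ := Finset.mem_filter.mp hu
          have hu2 : u ∈ W.toList := Finset.mem_toList.mpr (Finset.mem_inter.mp huSW).2
          have hv2 : v₀ ∈ W.toList := Finset.mem_toList.mpr (Finset.mem_inter.mp hv₀).2
          exact (List.idxOf_inj hu2).mp huidx
      rw [heq]
      simp [hk]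
  · -- recursive case
    push_neg at hbase
    set F := (E.filter (fun S => k+1 ≤ (S ∩ W).card)).image (fun S => S ∩ W) with hFdef
    have hF : ∀ T ∈ F, T ⊆ W ∧ k + 1 ≤ T.card := by
      intro T hT
      obtain ⟨S, hS, rfl⟩ := Finset.mem_image.mp hT
      exact ⟨Finset.inter_subset_right, (Finset.mem_filter.mp hS).2⟩
    have hFm : F.card ≤ m :=
      le_trans Finset.card_image_le (le_trans (Finset.card_filter_le _ _) hE)
    have hsN : sconst k m < W.card := by rw [hW]; exact hbase
    obtain ⟨C, hCW, hCcard, hCind⟩ := turan k m hk hm W F hF hFm hsN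
    rw [hW] at hCcard
    have hpsiN : 1 ≤ psi k m N := one_le_psi hk hm hbase
    set W' := W \ C with hW'def
    have hN' : W'.card = N - C.card := by rw [hW'def, card_sdiff_of_subset hCW, hW]
    have hCle : C.card ≤ N := by rw [← hW]; exact card_le_card hCW
    have hlt : N - C.card < N := by omega
    obtain ⟨t', c', hc'lt, hc'bound, hc'edges⟩ := IH (N - C.card) hlt W' hN'
    refine ⟨t' + 1, fun v => if v ∈ C then 0 else c' v + 1, ?_, ?_, ?_⟩
    · intro v hv
      by_cases hvC : v ∈ C
      · simp [hvC]
      · simp only [if_neg hvC]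
        have : v ∈ W' := Finset.mem_sdiff.mpr ⟨hv, hvC⟩
        have := hc'lt v this
        omega
    · -- the color-count bound
      rw [if_neg (by omega)]
      set N' := N - C.card with hN'd
      by_cases hb' : N' ≤ sconst k m
      · rw [if_pos hb'] at hc'bound
        have hG : 0 ≤ Gf k m N := Gf_nonneg k m N
        push_cast
        linarith
      · rw [if_neg hb'] at hc'bound
        push_neg at hb'
        -- gap bound : 1 + Gf N' ≤ Gf N
        have hgap : 1 + Gf k m N' ≤ Gf k m N := by
          have hsplit : Gf k m N' + ∑ i ∈ Finset.Ioc N' N, ((psi k m i : ℝ))⁻¹ = Gf k m N := by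
            rw [Gf, Gf]
            exact Finset.sum_Ioc_consecutive _ hb'.le (by omega)
          have hterm : ∀ i ∈ Finset.Ioc N' N, ((psi k m N : ℝ))⁻¹ ≤ ((psi k m i : ℝ))⁻¹ := by
            intro i hi
            obtain ⟨hi1, hi2⟩ := Finset.mem_Ioc.mp hi
            have hpos : 0 < psi k m i := one_le_psi hk hm (by omega)
            apply inv_anti₀
            · exact_mod_cast hpos
            · exact_mod_cast psi_mono hi2
          have hcard : (Finset.Ioc N' N).card = C.card := by
            rw [Nat.card_Ioc]; omega
          have hge : (C.card : ℝ) * ((psi k m N : ℝ))⁻¹ ≤ ∑ i ∈ Finset.Ioc N' N, ((psi k m i : ℝ))⁻¹ := by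
            calc (C.card : ℝ) * ((psi k m N : ℝ))⁻¹
                = (Finset.Ioc N' N).card • ((psi k m N : ℝ))⁻¹ := by
                  rw [hcard, nsmul_eq_mul]
            _ ≤ ∑ i ∈ Finset.Ioc N' N, ((psi k m i : ℝ))⁻¹ :=
                  Finset.card_nsmul_le_sum _ _ _ hterm
          have h1 : (1:ℝ) ≤ (C.card : ℝ) * ((psi k m N : ℝ))⁻¹ := by
            have hpN : (0:ℝ) < psi k m N := by exact_mod_cast hpsiN
            rw [← div_eq_mul_inv, le_div_iff₀ hpN, one_mul]
            exact_mod_cast hCcard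
          linarith
        push_cast
        push_cast at hc'bound
        linarith
    · -- edge property
      intro S hS hne
      by_cases hcase : (S ∩ W').Nonempty
      · obtain ⟨i', h1, h2⟩ := hc'edges S hS hcase
        refine ⟨i' + 1, ?_, ?_⟩
        · have heq : (S ∩ W).filter (fun v => (if v ∈ C then 0 else c' v + 1) = i' + 1)
              = (S ∩ W').filter (fun v => c' v = i') := by
            ext v
            simp only [Finset.mem_filter, Finset.mem_inter, hW'def, Finset.mem_sdiff]
            constructor
            · rintro ⟨⟨hvS, hvW⟩, hcv⟩
              by_cases hvC : v ∈ C
              · simp [hvC] at hcv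
              · simp only [if_neg hvC] at hcv
                exact ⟨⟨hvS, hvW, hvC⟩, by omega⟩
            · rintro ⟨⟨hvS, hvW, hvC⟩, hcv⟩
              exact ⟨⟨hvS, hvW⟩, by simp [if_neg hvC, hcv]⟩
          rw [heq]
          exact h1
        · have heq : (S ∩ W).filter (fun v => (if v ∈ C then 0 else c' v + 1) = i' + 1)
              = (S ∩ W').filter (fun v => c' v = i') := by
            ext v
            simp only [Finset.mem_filter, Finset.mem_inter, hW'def, Finset.mem_sdiff]
            constructor
            · rintro ⟨⟨hvS, hvW⟩, hcv⟩
              by_cases hvC : v ∈ C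
              · simp [hvC] at hcv
              · simp only [if_neg hvC] at hcv
                exact ⟨⟨hvS, hvW, hvC⟩, by omega⟩
            · rintro ⟨⟨hvS, hvW, hvC⟩, hcv⟩
              exact ⟨⟨hvS, hvW⟩, by simp [if_neg hvC, hcv]⟩
          rw [heq]
          exact h2
      · -- S ∩ W ⊆ C
        have hsub : S ∩ W ⊆ C := by
          intro v hv
          by_contra hvC
          exact hcase ⟨v, by
            rw [hW'def]
            simp only [Finset.mem_inter, Finset.mem_sdiff]
            obtain ⟨h1, h2⟩ := Finset.mem_inter.mp hv
            exact ⟨h1, h2, hvC⟩⟩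
        have hsmall : (S ∩ W).card ≤ k := by
          by_contra hbig
          push_neg at hbig
          have hmem : S ∩ W ∈ F := by
            rw [hFdef]
            exact Finset.mem_image_of_mem _ (Finset.mem_filter.mpr ⟨hS, by omega⟩)
          exact hCind _ hmem hsub
        refine ⟨0, ?_, ?_⟩
        · have heq : (S ∩ W).filter (fun v => (if v ∈ C then 0 else c' v + 1) = 0) = S ∩ W := by
            apply Finset.filter_true_of_mem
            intro v hv
            simp [hsub hv]
          rw [heq]
          exact Finset.card_pos.mpr hne
        · have : (S ∩ W).filter (fun v => (if v ∈ C then 0 else c' v + 1) = 0) ⊆ S ∩ W :=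
            Finset.filter_subset _ _
          exact le_trans (card_le_card this) hsmall

end Turan


section Analysis
variable {k m : ℕ}

lemma inv_xfun_eq (hk : 1 ≤ k) (hm : 1 ≤ m) (i : ℕ) (hi : 1 ≤ i) :
    (xfun k m i)⁻¹ = ((2:ℝ)^(k+2)*m)^((1:ℝ)/k) * (1/((i:ℝ) * (i:ℝ)^((1:ℝ)/k))) := by
  have hipos : (0:ℝ) < i := by exact_mod_cast hi
  have hm' : (0:ℝ) < m := by exact_mod_cast hm
  have hA : (0:ℝ) < (2:ℝ)^(k+2)*m := by positivity
  have hkR : (k:ℝ) ≠ 0 := by exact_mod_cast Nat.one_le_iff_ne_zero.mp hk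
  have e1 : ((i:ℝ)^(k+1)) ^ ((1:ℝ)/k) = (i:ℝ) * (i:ℝ)^((1:ℝ)/k) := by
    rw [← Real.rpow_natCast (i:ℝ) (k+1), ← Real.rpow_mul (le_of_lt hipos)]
    have he : ((k+1:ℕ):ℝ) * ((1:ℝ)/k) = 1 + (1:ℝ)/k := by
      push_cast
      field_simp
    rw [he, Real.rpow_add hipos, Real.rpow_one]
  have h1 : xfun k m i = ((i:ℝ) * (i:ℝ)^((1:ℝ)/k)) / ((2:ℝ)^(k+2)*m)^((1:ℝ)/k) := by
    rw [xfun, Real.div_rpow (by positivity) (le_of_lt hA), e1]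
  rw [h1]
  have hApow : (0:ℝ) < ((2:ℝ)^(k+2)*m)^((1:ℝ)/k) := Real.rpow_pos_of_pos hA _
  have hx : (0:ℝ) < (i:ℝ) * (i:ℝ)^((1:ℝ)/k) := by positivity
  rw [inv_div]
  field_simp

lemma inv_psi_le (hk : 1 ≤ k) (hm : 1 ≤ m) {i : ℕ} (hi : sconst k m < i) :
    ((psi k m i : ℝ))⁻¹ ≤ 4 * (xfun k m i)⁻¹ + 4 * (1/(i:ℝ)) := by
  have hi1 : 1 ≤ i := by
    have : 1 ≤ sconst k m := le_trans (by omega) (le_max_left (4*(k+1)) _)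
    omega
  have hipos : (0:ℝ) < i := by exact_mod_cast hi1
  have hx1 : 1 ≤ xfun k m i := one_le_xfun hk hm hi
  have hxpos : 0 < xfun k m i := lt_of_lt_of_le zero_lt_one hx1
  have hr1 : 1 ≤ rfun k m i := one_le_rfun hk hm hi
  set a := (rfun k m i + 1)/2 with hadef
  set b := (i+1)/2 with hbdef
  have ha1 : 1 ≤ a := by omega
  have hb1 : 1 ≤ b := by omega
  have hapos : (0:ℝ) < a := by exact_mod_cast ha1
  have hbpos : (0:ℝ) < b := by exact_mod_cast hb1
  -- x < 4a
  have hxa : xfun k m i ≤ 4*(a:ℝ) := by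
    have h4a : rfun k m i + 1 ≤ 4*a := by omega
    have : xfun k m i < rfun k m i + 1 := Nat.lt_floor_add_one _
    have h4a' : ((rfun k m i + 1 : ℕ):ℝ) ≤ 4*(a:ℝ) := by exact_mod_cast h4a
    push_cast at h4a' ⊢
    linarith
  have hib : (i:ℝ) ≤ 4*(b:ℝ) := by
    have h4b : i ≤ 4*b := by omega
    exact_mod_cast h4b
  have hainv : (a:ℝ)⁻¹ ≤ 4 * (xfun k m i)⁻¹ := by
    rw [inv_eq_one_div, inv_eq_one_div, mul_one_div, div_le_div_iff₀ hapos hxpos, one_mul]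
    nlinarith
  have hbinv : (b:ℝ)⁻¹ ≤ 4 * (1/(i:ℝ)) := by
    rw [inv_eq_one_div, mul_one_div, div_le_div_iff₀ hbpos hipos, one_mul]
    nlinarith
  have hxinv : (0:ℝ) ≤ 4 * (xfun k m i)⁻¹ := by positivity
  have hiinv : (0:ℝ) ≤ 4 * (1/(i:ℝ)) := by positivity
  have hpsi : psi k m i = min a b := rfl
  rcases Nat.le_total a b with hab | hab
  · rw [hpsi, min_eq_left hab]
    linarith
  · rw [hpsi, min_eq_right hab]
    linarith

lemma Apow_le (hk : 1 ≤ k) (hm : 1 ≤ m) :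
    ((2:ℝ)^(k+2)*m)^((1:ℝ)/(k+1)) ≤ 4*(m:ℝ)^((1:ℝ)/(k+1)) := by
  have hm' : (0:ℝ) < m := by exact_mod_cast hm
  have h2 : (0:ℝ) ≤ (2:ℝ)^(k+2) := by positivity
  rw [Real.mul_rpow h2 (le_of_lt hm')]
  have hb : ((2:ℝ)^(k+2))^((1:ℝ)/(k+1)) ≤ 4 := by
    rw [← Real.rpow_natCast (2:ℝ) (k+2), ← Real.rpow_mul (by norm_num : (0:ℝ) ≤ 2)]
    have he : ((k+2:ℕ):ℝ) * ((1:ℝ)/(k+1)) ≤ 2 := by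
      push_cast
      rw [mul_one_div, div_le_iff₀ (by positivity)]
      nlinarith [Nat.cast_nonneg (α := ℝ) k]
    calc (2:ℝ) ^ (((k+2:ℕ):ℝ) * ((1:ℝ)/(k+1))) ≤ (2:ℝ) ^ (2:ℝ) :=
          Real.rpow_le_rpow_of_exponent_le one_le_two he
    _ = 4 := by
          rw [show (2:ℝ) = ((2:ℕ):ℝ) from by norm_num, Real.rpow_natCast]
          norm_num
  have hmp : (0:ℝ) ≤ (m:ℝ)^((1:ℝ)/(k+1)) := Real.rpow_nonneg (le_of_lt hm') _
  nlinarith [Real.rpow_nonneg h2 ((1:ℝ)/(k+1))]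

lemma sconst_le (hk : 1 ≤ k) (hm : 1 ≤ m) :
    (sconst k m : ℝ) ≤ 4*(k:ℝ)+5 + 4*(m:ℝ)^((1:ℝ)/(k+1)) := by
  have h1 : sconst k m = max (4*(k+1)) ⌈((2:ℝ)^(k+2) * m) ^ ((1:ℝ)/(k+1))⌉₊ := rfl
  have hx0 : (0:ℝ) ≤ ((2:ℝ)^(k+2) * m) ^ ((1:ℝ)/(k+1)) := by positivity
  have hceil : (⌈((2:ℝ)^(k+2) * m) ^ ((1:ℝ)/(k+1))⌉₊ : ℝ) <
      ((2:ℝ)^(k+2) * m) ^ ((1:ℝ)/(k+1)) + 1 := Nat.ceil_lt_add_one hx0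
  have hA := Apow_le hk hm
  rcases Nat.le_total (4*(k+1)) ⌈((2:ℝ)^(k+2) * m) ^ ((1:ℝ)/(k+1))⌉₊ with h | h
  · rw [h1, max_eq_right h]
    push_cast
    linarith
  · rw [h1, max_eq_left h]
    have hmp : (0:ℝ) ≤ (m:ℝ)^((1:ℝ)/(k+1)) := Real.rpow_nonneg (Nat.cast_nonneg m) _
    push_cast
    linarith

lemma sA_le (hk : 1 ≤ k) (hm : 1 ≤ m) :
    ((2:ℝ)^(k+2)*m)^((1:ℝ)/k) * ((sconst k m:ℝ))^(-(1:ℝ)/k) ≤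
      4*(m:ℝ)^((1:ℝ)/(k+1)) := by
  set A := (2:ℝ)^(k+2)*(m:ℝ) with hAdef
  have hm' : (0:ℝ) < m := by exact_mod_cast hm
  have hA : (0:ℝ) < A := by rw [hAdef]; positivity
  have hkR : (0:ℝ) < k := by exact_mod_cast hk
  have hs1 : A^((1:ℝ)/(k+1)) ≤ (sconst k m : ℝ) := by
    rw [hAdef]
    calc ((2:ℝ)^(k+2)*(m:ℝ))^((1:ℝ)/(k+1))
        ≤ (⌈((2:ℝ)^(k+2)*(m:ℝ)) ^ ((1:ℝ)/(k+1))⌉₊ : ℝ) := Nat.le_ceil _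
    _ ≤ (sconst k m : ℝ) := by
        unfold sconst
        exact_mod_cast (le_max_right _ _)
  have hApos : (0:ℝ) < A^((1:ℝ)/(k+1)) := Real.rpow_pos_of_pos hA _
  have hspos : (0:ℝ) < (sconst k m : ℝ) := lt_of_lt_of_le hApos hs1
  -- s^{-1/k} ≤ (A^{1/(k+1)})^{-1/k}
  have hmono : ((sconst k m:ℝ))^(-(1:ℝ)/k) ≤ (A^((1:ℝ)/(k+1)))^(-(1:ℝ)/k) := by
    rw [neg_div, Real.rpow_neg (le_of_lt hspos), Real.rpow_neg (le_of_lt hApos)]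
    apply inv_anti₀ (Real.rpow_pos_of_pos hApos _)
    exact Real.rpow_le_rpow (le_of_lt hApos) hs1 (by positivity)
  have hcollapse : A^((1:ℝ)/k) * (A^((1:ℝ)/(k+1)))^(-(1:ℝ)/k) = A^((1:ℝ)/(k+1)) := by
    rw [← Real.rpow_mul (le_of_lt hA), ← Real.rpow_add hA]
    congr 1
    field_simp
    ring
  calc A^((1:ℝ)/k) * ((sconst k m:ℝ))^(-(1:ℝ)/k)
      ≤ A^((1:ℝ)/k) * (A^((1:ℝ)/(k+1)))^(-(1:ℝ)/k) := by
        apply mul_le_mul_of_nonneg_left hmono (Real.rpow_nonneg (le_of_lt hA) _)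
  _ = A^((1:ℝ)/(k+1)) := hcollapse
  _ ≤ 4*(m:ℝ)^((1:ℝ)/(k+1)) := Apow_le hk hm

lemma Gf_le (hk : 1 ≤ k) (hm : 1 ≤ m) (n : ℕ) :
    Gf k m n ≤ 16*(k:ℝ)*((m:ℝ))^((1:ℝ)/(k+1)) + 4*Real.log n := by
  set s := sconst k m with hsdef
  have hs1 : 1 ≤ s := le_trans (by omega) (le_max_left (4*(k+1)) _)
  have hlog0 : 0 ≤ Real.log n := Real.log_natCast_nonneg n
  have hm0 : (0:ℝ) ≤ (m:ℝ)^((1:ℝ)/(k+1)) := Real.rpow_nonneg (Nat.cast_nonneg m) _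
  rcases Nat.le_total n s with hns | hsn
  · have : Finset.Ioc s n = ∅ := by
      apply Finset.Ioc_eq_empty
      omega
    rw [Gf, ← hsdef, this]
    simp
    positivity
  · have hbound : ∀ i ∈ Finset.Ioc s n, ((psi k m i : ℝ))⁻¹ ≤
        4 * (xfun k m i)⁻¹ + 4 * (1/(i:ℝ)) := by
      intro i hi
      obtain ⟨hi1, _⟩ := Finset.mem_Ioc.mp hi
      exact inv_psi_le hk hm hi1
    have hsum1 : ∑ i ∈ Finset.Ioc s n, (xfun k m i)⁻¹ ≤ 4*(k:ℝ)*(m:ℝ)^((1:ℝ)/(k+1)) := by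
      have heq : ∀ i ∈ Finset.Ioc s n, (xfun k m i)⁻¹ =
          ((2:ℝ)^(k+2)*m)^((1:ℝ)/k) * (1/((i:ℝ) * (i:ℝ)^((1:ℝ)/k))) := by
        intro i hi
        obtain ⟨hi1, _⟩ := Finset.mem_Ioc.mp hi
        exact inv_xfun_eq hk hm i (by omega)
      rw [Finset.sum_congr rfl heq, ← Finset.mul_sum]
      have htail := tail_sum_x k hk s n hs1 hsn
      have hApow : (0:ℝ) ≤ ((2:ℝ)^(k+2)*(m:ℝ))^((1:ℝ)/k) := by positivity
      calc ((2:ℝ)^(k+2)*m)^((1:ℝ)/k) * ∑ i ∈ Finset.Ioc s n, (1/((i:ℝ) * (i:ℝ)^((1:ℝ)/k)))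
          ≤ ((2:ℝ)^(k+2)*m)^((1:ℝ)/k) * ((k:ℝ) * (s:ℝ)^(-(1:ℝ)/k)) :=
            mul_le_mul_of_nonneg_left htail hApow
      _ = (k:ℝ) * (((2:ℝ)^(k+2)*m)^((1:ℝ)/k) * ((s:ℝ))^(-(1:ℝ)/k)) := by ring
      _ ≤ (k:ℝ) * (4*(m:ℝ)^((1:ℝ)/(k+1))) := by
            apply mul_le_mul_of_nonneg_left (sA_le hk hm) (Nat.cast_nonneg k)
      _ = 4*(k:ℝ)*(m:ℝ)^((1:ℝ)/(k+1)) := by ring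
    have hsum2 : ∑ i ∈ Finset.Ioc s n, (1/(i:ℝ)) ≤ Real.log n :=
      tail_sum_harmonic s n hs1 hsn
    calc Gf k m n = ∑ i ∈ Finset.Ioc s n, ((psi k m i : ℝ))⁻¹ := rfl
    _ ≤ ∑ i ∈ Finset.Ioc s n, (4 * (xfun k m i)⁻¹ + 4 * (1/(i:ℝ))) :=
        Finset.sum_le_sum hbound
    _ = 4 * ∑ i ∈ Finset.Ioc s n, (xfun k m i)⁻¹ + 4 * ∑ i ∈ Finset.Ioc s n, (1/(i:ℝ)) := by
        rw [Finset.sum_add_distrib, Finset.mul_sum, Finset.mul_sum]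
    _ ≤ 4 * (4*(k:ℝ)*(m:ℝ)^((1:ℝ)/(k+1))) + 4 * Real.log n := by
        apply add_le_add
        · exact mul_le_mul_of_nonneg_left hsum1 (by norm_num)
        · exact mul_le_mul_of_nonneg_left hsum2 (by norm_num)
    _ ≤ 16*(k:ℝ)*((m:ℝ))^((1:ℝ)/(k+1)) + 4*Real.log n := by
        nlinarith [Nat.cast_nonneg (α := ℝ) k]

end Analysis

section Final
variable {V : Type} [Fintype V] [DecidableEq V]

lemma repsColor (E : Finset (Finset V)) (k : ℕ) (hk : 1 ≤ k) :
    ∃ c : V → ℕ, ((Finset.univ.image c).card ≤ E.card + 1) ∧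
      ∀ S ∈ E, S.Nonempty → ∃ i, 1 ≤ (S.filter fun v => c v = i).card ∧
        (S.filter fun v => c v = i).card ≤ k := by
  classical
  by_cases hV : IsEmpty V
  · refine ⟨fun _ => 0, ?_, ?_⟩
    · have : (Finset.univ : Finset V) = ∅ := Finset.univ_eq_empty
      simp [this]
    · intro S hS hne
      obtain ⟨v, _⟩ := hne
      exact (hV.false v).elim
  · have hVne : Nonempty V := not_isEmpty_iff.mp hV
    set pick : Finset V → V := fun S => if h : S.Nonempty then h.choose else Classical.arbitrary V
      with hpickdef
    set R := (E.filter (fun S => S.Nonempty)).image pick with hRdef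
    set c : V → ℕ := fun v => if v ∈ R then R.toList.idxOf v + 1 else 0 with hcdef
    have hcv : ∀ v, c v < R.card + 1 := by
      intro v
      rw [hcdef]
      by_cases hvR : v ∈ R
      · simp only [if_pos hvR]
        have : R.toList.idxOf v < R.toList.length :=
          List.idxOf_lt_length_iff.mpr (Finset.mem_toList.mpr hvR)
        rw [Finset.length_toList] at this
        omega
      · simp [if_neg hvR]
    refine ⟨c, ?_, ?_⟩
    · have hsub : Finset.univ.image c ⊆ Finset.range (R.card + 1) := by
        intro x hx
        obtain ⟨v, _, rfl⟩ := Finset.mem_image.mp hx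
        exact Finset.mem_range.mpr (hcv v)
      have hRcard : R.card ≤ E.card :=
        le_trans Finset.card_image_le (Finset.card_filter_le _ _)
      calc (Finset.univ.image c).card ≤ (Finset.range (R.card + 1)).card :=
            Finset.card_le_card hsub
      _ = R.card + 1 := Finset.card_range _
      _ ≤ E.card + 1 := by omega
    · intro S hS hne
      set w := pick S with hw
      have hwS : w ∈ S := by
        rw [hw, hpickdef]
        simp only [dif_pos hne]
        exact hne.choose_spec
      have hwR : w ∈ R := by
        rw [hRdef]
        exact Finset.mem_image_of_mem pick (Finset.mem_filter.mpr ⟨hS, hne⟩)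
      refine ⟨c w, ?_, ?_⟩
      · have : w ∈ S.filter (fun v => c v = c w) := Finset.mem_filter.mpr ⟨hwS, rfl⟩
        exact Finset.card_pos.mpr ⟨w, this⟩
      · have heq : S.filter (fun v => c v = c w) = {w} := by
          apply Finset.eq_singleton_iff_unique_mem.mpr
          refine ⟨Finset.mem_filter.mpr ⟨hwS, rfl⟩, ?_⟩
          intro u hu
          obtain ⟨huS, hcu⟩ := Finset.mem_filter.mp hu
          have hcw : c w = R.toList.idxOf w + 1 := by rw [hcdef]; simp [if_pos hwR]
          by_cases huR : u ∈ R
          · have hcu' : c u = R.toList.idxOf u + 1 := by rw [hcdef]; simp [if_pos huR]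
            rw [hcu', hcw] at hcu
            have : R.toList.idxOf u = R.toList.idxOf w := by omega
            exact (List.idxOf_inj (Finset.mem_toList.mpr huR)).mp this
          · have : c u = 0 := by rw [hcdef]; simp [if_neg huR]
            rw [this, hcw] at hcu
            omega
        rw [heq]
        simpa using hk

lemma mainColor (E : Finset (Finset V)) (k m : ℕ) (hk : 1 ≤ k) (hm : 1 ≤ m)
    (hE : E.card ≤ m) :
    ∃ c : V → ℕ, ((Finset.univ.image c).card : ℝ) ≤
        (sconst k m : ℝ) + 1 + Gf k m (Fintype.card V) ∧
      ∀ S ∈ E, S.Nonempty → ∃ i, 1 ≤ (S.filter fun v => c v = i).card ∧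
        (S.filter fun v => c v = i).card ≤ k := by
  classical
  obtain ⟨t, c, hlt, hbound, hedge⟩ :=
    recColor k m hk hm E hE (Fintype.card V) Finset.univ (Finset.card_univ)
  refine ⟨c, ?_, ?_⟩
  · have hsub : Finset.univ.image c ⊆ Finset.range t := by
      intro x hx
      obtain ⟨v, hv, rfl⟩ := Finset.mem_image.mp hx
      exact Finset.mem_range.mpr (hlt v (Finset.mem_univ v))
    have h1 : ((Finset.univ.image c).card : ℝ) ≤ (t:ℝ) := by
      have := Finset.card_le_card hsub
      rw [Finset.card_range] at this
      exact_mod_cast this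
    have hG : 0 ≤ Gf k m (Fintype.card V) := Gf_nonneg k m _
    rcases le_or_gt (Fintype.card V) (sconst k m) with hc | hc
    · rw [if_pos hc] at hbound
      linarith
    · rw [if_neg (by omega)] at hbound
      linarith
  · intro S hS hne
    have : (S ∩ Finset.univ).Nonempty := by rwa [Finset.inter_univ]
    obtain ⟨i, h1, h2⟩ := hedge S hS this
    rw [Finset.inter_univ] at h1 h2
    exact ⟨i, h1, h2⟩

end Final

/-- For every `k > 1` there is a constant `C` such that every hypergraph on
`n ≥ 2` vertices with at most `m ≥ 1` hyperedges admits a `k`-conflict-free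
coloring with at most `C · m^{1/(k+1)} · (log n)^{k/(k+1)}` colors. -/
theorem stmt10 (k : ℕ) (hk : 1 < k) :
    ∃ C : ℝ, 0 < C ∧
      ∀ (V : Type) [Fintype V] [DecidableEq V] (E : Finset (Finset V)) (n m : ℕ),
        Fintype.card V = n → 2 ≤ n → E.card ≤ m → 1 ≤ m →
        ∃ c : V → ℕ,
          ((Finset.univ.image c).card : ℝ) ≤
            C * (m : ℝ) ^ ((1 : ℝ) / (k + 1)) * Real.log n ^ ((k : ℝ) / (k + 1)) ∧
          ∀ S ∈ E, S.Nonempty →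
            ∃ i, 1 ≤ (S.filter fun v => c v = i).card ∧
              (S.filter fun v => c v = i).card ≤ k := by
  have hk1 : 1 ≤ k := hk.le
  have hlog2 : (0:ℝ) < Real.log 2 := Real.log_pos one_lt_two
  set L2 := (Real.log 2) ^ ((k:ℝ)/(k+1)) with hL2def
  have hL2pos : 0 < L2 := Real.rpow_pos_of_pos hlog2 _
  refine ⟨(20*(k:ℝ)+10)/L2 + 6, by positivity, ?_⟩
  intro V _ _ E n m hcard h2n hEm hm1
  have hm0 : (0:ℝ) < m := by exact_mod_cast hm1
  have hn1 : (1:ℝ) < n := by exact_mod_cast h2n.trans_lt' one_lt_two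
  have hlogn : 0 < Real.log n := Real.log_pos hn1
  have hlog2n : Real.log 2 ≤ Real.log n := by
    apply Real.log_le_log (by norm_num)
    exact_mod_cast h2n
  have hekpos : (0:ℝ) ≤ (k:ℝ)/(k+1) := by positivity
  have he1pos : (0:ℝ) ≤ (1:ℝ)/(k+1) := by positivity
  have hLn : (0:ℝ) < (Real.log n)^((k:ℝ)/(k+1)) := Real.rpow_pos_of_pos hlogn _
  have hL2Ln : L2 ≤ (Real.log n)^((k:ℝ)/(k+1)) := by
    rw [hL2def]
    exact Real.rpow_le_rpow (le_of_lt hlog2) hlog2n hekpos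
  have hmp1 : (1:ℝ) ≤ (m:ℝ)^((1:ℝ)/(k+1)) := by
    calc (1:ℝ) = (1:ℝ)^((1:ℝ)/(k+1)) := (Real.one_rpow _).symm
    _ ≤ (m:ℝ)^((1:ℝ)/(k+1)) := by
        apply Real.rpow_le_rpow zero_le_one (by exact_mod_cast hm1) he1pos
  have hsplit : ∀ x : ℝ, 0 < x → x ^ ((1:ℝ)/(k+1)) * x ^ ((k:ℝ)/(k+1)) = x := by
    intro x hx
    rw [← Real.rpow_add hx]
    have : (1:ℝ)/(k+1) + (k:ℝ)/(k+1) = 1 := by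
      field_simp
      ring
    rw [this, Real.rpow_one]
  rcases le_or_gt (m:ℝ) (Real.log n) with hcs | hcs
  · -- few edges: use representatives
    obtain ⟨c, hccard, hprop⟩ := repsColor E k hk1
    refine ⟨c, ?_, hprop⟩
    have h1 : ((Finset.univ.image c).card : ℝ) ≤ (m:ℝ) + 1 := by
      have : (Finset.univ.image c).card ≤ m + 1 := le_trans hccard (by omega)
      exact_mod_cast this
    have h2 : (m:ℝ) + 1 ≤ 2*(m:ℝ) := by
      have : (1:ℝ) ≤ m := by exact_mod_cast hm1
      linarith
    have h3 : (m:ℝ) = (m:ℝ)^((1:ℝ)/(k+1)) * (m:ℝ)^((k:ℝ)/(k+1)) := (hsplit _ hm0).symm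
    have h4 : (m:ℝ)^((k:ℝ)/(k+1)) ≤ (Real.log n)^((k:ℝ)/(k+1)) :=
      Real.rpow_le_rpow (le_of_lt hm0) hcs hekpos
    have hmep : (0:ℝ) ≤ (m:ℝ)^((1:ℝ)/(k+1)) := by positivity
    calc ((Finset.univ.image c).card : ℝ) ≤ (m:ℝ) + 1 := h1
    _ ≤ 2*(m:ℝ) := h2
    _ = 2*((m:ℝ)^((1:ℝ)/(k+1)) * (m:ℝ)^((k:ℝ)/(k+1))) := by rw [← h3]
    _ ≤ 2*((m:ℝ)^((1:ℝ)/(k+1)) * (Real.log n)^((k:ℝ)/(k+1))) := by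
          apply mul_le_mul_of_nonneg_left ?_ (by norm_num)
          exact mul_le_mul_of_nonneg_left h4 hmep
    _ ≤ ((20*(k:ℝ)+10)/L2 + 6) * (m:ℝ)^((1:ℝ)/(k+1)) * (Real.log n)^((k:ℝ)/(k+1)) := by
          have hpos : (0:ℝ) ≤ (m:ℝ)^((1:ℝ)/(k+1)) * (Real.log n)^((k:ℝ)/(k+1)) := by positivity
          rw [mul_assoc]
          have hC2 : (2:ℝ) ≤ (20*(k:ℝ)+10)/L2 + 6 := by
            have : (0:ℝ) ≤ (20*(k:ℝ)+10)/L2 := by positivity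
            linarith
          exact mul_le_mul_of_nonneg_right hC2 hpos
  · -- main coloring
    obtain ⟨c, hcbound, hprop⟩ := mainColor E k m hk1 hm1 hEm
    refine ⟨c, ?_, hprop⟩
    rw [hcard] at hcbound
    have hGf := Gf_le (m := m) hk1 hm1 n
    have hsc := sconst_le (m := m) hk1 hm1
    have htotal : ((Finset.univ.image c).card : ℝ) ≤
        (20*(k:ℝ)+10) * (m:ℝ)^((1:ℝ)/(k+1)) + 4*Real.log n := by
      have hkR : (0:ℝ) ≤ k := Nat.cast_nonneg k
      nlinarith [hmp1]
    have h5 : 4*Real.log n ≤ 4*(m:ℝ)^((1:ℝ)/(k+1)) * (Real.log n)^((k:ℝ)/(k+1)) := by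
      have he : Real.log n = (Real.log n)^((1:ℝ)/(k+1)) * (Real.log n)^((k:ℝ)/(k+1)) :=
        (hsplit _ hlogn).symm
      have h6 : (Real.log n)^((1:ℝ)/(k+1)) ≤ (m:ℝ)^((1:ℝ)/(k+1)) :=
        Real.rpow_le_rpow (le_of_lt hlogn) (le_of_lt hcs) he1pos
      calc 4*Real.log n = 4*((Real.log n)^((1:ℝ)/(k+1)) * (Real.log n)^((k:ℝ)/(k+1))) := by
            rw [← he]
      _ ≤ 4*((m:ℝ)^((1:ℝ)/(k+1)) * (Real.log n)^((k:ℝ)/(k+1))) := by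
            apply mul_le_mul_of_nonneg_left ?_ (by norm_num)
            exact mul_le_mul_of_nonneg_right h6 (le_of_lt hLn)
      _ = 4*(m:ℝ)^((1:ℝ)/(k+1)) * (Real.log n)^((k:ℝ)/(k+1)) := by ring
    have h7 : (20*(k:ℝ)+10) * (m:ℝ)^((1:ℝ)/(k+1)) ≤
        ((20*(k:ℝ)+10)/L2) * (m:ℝ)^((1:ℝ)/(k+1)) * (Real.log n)^((k:ℝ)/(k+1)) := by
      have hkR : (0:ℝ) ≤ 20*(k:ℝ)+10 := by positivity
      have hmep : (0:ℝ) ≤ (m:ℝ)^((1:ℝ)/(k+1)) := by positivity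
      calc (20*(k:ℝ)+10) * (m:ℝ)^((1:ℝ)/(k+1))
          = ((20*(k:ℝ)+10)/L2) * (m:ℝ)^((1:ℝ)/(k+1)) * L2 := by
            field_simp
      _ ≤ ((20*(k:ℝ)+10)/L2) * (m:ℝ)^((1:ℝ)/(k+1)) * (Real.log n)^((k:ℝ)/(k+1)) := by
            apply mul_le_mul_of_nonneg_left hL2Ln (by positivity)
    calc ((Finset.univ.image c).card : ℝ)
        ≤ (20*(k:ℝ)+10) * (m:ℝ)^((1:ℝ)/(k+1)) + 4*Real.log n := htotal
    _ ≤ ((20*(k:ℝ)+10)/L2) * (m:ℝ)^((1:ℝ)/(k+1)) * (Real.log n)^((k:ℝ)/(k+1)) +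
          4*(m:ℝ)^((1:ℝ)/(k+1)) * (Real.log n)^((k:ℝ)/(k+1)) := add_le_add h7 h5
    _ ≤ ((20*(k:ℝ)+10)/L2 + 6) * (m:ℝ)^((1:ℝ)/(k+1)) * (Real.log n)^((k:ℝ)/(k+1)) := by
          have hpos : (0:ℝ) ≤ (m:ℝ)^((1:ℝ)/(k+1)) * (Real.log n)^((k:ℝ)/(k+1)) := by positivity
          nlinarith
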